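/- Under Assumptions B, let u : [0,∞) → H be the continuously differentiable function with u(t) ∈ B(y, R) and F(u(t)) = h + e^{−t}·v₀ for all t ≥ 0. Then ‖u(t) − u₀‖ ≤ m·r/(1−q) for all t ≥ 0. -/

import Mathlib

open Metric Set Filter

theorem stmt_9
    {H : Type*} [NormedAddCommGroup H] [InnerProductSpace ℝ H] [CompleteSpace H]
    (F : H → H) (F' : H → H →L[ℝ] H) (y f : H) (R m q : ℝ)
    (hf : F y = f) (hR : 0 < R)
    (hdiff : ∀ u ∈ closedBall y R, HasFDerivAt F (F' u) u)
    (Q : H →L[ℝ] H)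
    (hQl : Q.comp (F' y) = ContinuousLinearMap.id ℝ H)
    (hQr : (F' y).comp Q = ContinuousLinearMap.id ℝ H)
    (hm : 0 < m) (hQm : ‖Q‖ ≤ m)
    (ω : ℝ → ℝ)
    (hωcont : ContinuousOn ω (Icc 0 (2 * R)))
    (hωmono : StrictMonoOn ω (Icc 0 (2 * R)))
    (hω0 : ω 0 = 0)
    (hωF : ∀ u ∈ closedBall y R, ∀ v ∈ closedBall y R, ‖F' u - F' v‖ ≤ ω ‖u - v‖)
    (hq : m * ω R = q) (hq0 : 0 < q) (hq1 : q < 1)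
    (ρ : ℝ) (hρ : ρ = (1 - q) * R / m)
    (u₀ h : H) (v₀ : H) (hv₀ : v₀ = F u₀ - h)
    (r δ : ℝ) (hr : r = ‖v₀‖) (hδ : ‖h - f‖ ≤ δ) (hδr : δ + r ≤ ρ)
    (u : ℝ → H)
    (hu : ∀ t : ℝ, 0 ≤ t → u t ∈ closedBall y R ∧ F (u t) = h + Real.exp (-t) • v₀)
    (u' : ℝ → H)
    (huderiv : ∀ t ∈ Ici (0:ℝ), HasDerivWithinAt u (u' t) (Ici 0) t)
    (hu'cont : ContinuousOn u' (Ici 0))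
    (hu0 : u 0 = u₀) :
    ∀ t : ℝ, 0 ≤ t → ‖u t - u₀‖ ≤ m * r / (1 - q) := by
  have h1q : (0:ℝ) < 1 - q := by linarith
  have hr0 : 0 ≤ r := hr ▸ norm_nonneg _
  set C : ℝ := m * r / (1 - q) with hC
  have hC0 : 0 ≤ C := by positivity
  -- pointwise derivative bound
  have key : ∀ x : ℝ, 0 ≤ x → ‖u' x‖ ≤ C * Real.exp (-x) := by
    intro x hx
    have hux := (hu x hx).1
    -- derivative of F ∘ u within Ici 0 at x
    have hcomp : HasDerivWithinAt (F ∘ u) (F' (u x) (u' x)) (Ici 0) x :=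
      (hdiff (u x) hux).comp_hasDerivWithinAt x (huderiv x hx)
    have hrhs : HasDerivWithinAt (fun s : ℝ => h + Real.exp (-s) • v₀)
        ((-Real.exp (-x)) • v₀) (Ici 0) x := by
      have he : HasDerivAt (fun s : ℝ => Real.exp (-s)) (-Real.exp (-x)) x := by
        have := (Real.hasDerivAt_exp (-x)).comp x (hasDerivAt_neg x)
        simpa [mul_comm, Function.comp_def] using this
      exact ((he.smul_const v₀).const_add h).hasDerivWithinAt
    have hcongr : HasDerivWithinAt (fun s : ℝ => h + Real.exp (-s) • v₀)
        (F' (u x) (u' x)) (Ici 0) x := by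
      refine hcomp.congr ?_ ?_
      · intro s hs; exact ((hu s hs).2).symm
      · exact ((hu x hx).2).symm
    have hud : UniqueDiffWithinAt ℝ (Ici (0:ℝ)) x := uniqueDiffOn_Ici 0 x hx
    have heq : F' (u x) (u' x) = (-Real.exp (-x)) • v₀ := by
      have := hcongr.derivWithin hud
      rw [hrhs.derivWithin hud] at this
      exact this.symm
    -- apply Q
    have hQid : ∀ w : H, Q (F' y w) = w := fun w => by
      have := congrArg (fun T : H →L[ℝ] H => T w) hQl
      simpa using this
    have hsplit : u' x = Q ((-Real.exp (-x)) • v₀) - Q ((F' (u x) - F' y) (u' x)) := by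
      rw [← heq]
      have : (F' (u x) - F' y) (u' x) = F' (u x) (u' x) - F' y (u' x) := rfl
      rw [this, map_sub, hQid]
      abel
    -- operator norm bound
    have hyball : y ∈ closedBall y R := by simp [hR.le]
    have hωle : ω ‖u x - y‖ ≤ ω R := by
      have hd0 : 0 ≤ ‖u x - y‖ := norm_nonneg _
      have hdR : ‖u x - y‖ ≤ R := by
        have := mem_closedBall_iff_norm.mp hux; simpa using this
      exact hωmono.monotoneOn ⟨hd0, by linarith⟩ ⟨by linarith, by linarith⟩ hdR
    have hA : ‖F' (u x) - F' y‖ ≤ ω R := le_trans (hωF (u x) hux y hyball) hωle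
    have hbound : ‖u' x‖ ≤ m * Real.exp (-x) * r + q * ‖u' x‖ := by
      conv_lhs => rw [hsplit]
      have h1 : ‖Q ((-Real.exp (-x)) • v₀)‖ ≤ m * Real.exp (-x) * r := by
        calc ‖Q ((-Real.exp (-x)) • v₀)‖ ≤ ‖Q‖ * ‖(-Real.exp (-x)) • v₀‖ :=
              Q.le_opNorm _
          _ = ‖Q‖ * (Real.exp (-x) * ‖v₀‖) := by
              rw [norm_smul]; simp [abs_of_pos (Real.exp_pos (-x))]
          _ ≤ m * (Real.exp (-x) * r) := by
              exact mul_le_mul hQm (le_of_eq (by rw [hr])) (by positivity) hm.le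
          _ = m * Real.exp (-x) * r := by ring
      have h2 : ‖Q ((F' (u x) - F' y) (u' x))‖ ≤ q * ‖u' x‖ := by
        calc ‖Q ((F' (u x) - F' y) (u' x))‖ ≤ ‖Q‖ * ‖(F' (u x) - F' y) (u' x)‖ :=
              Q.le_opNorm _
          _ ≤ ‖Q‖ * (‖F' (u x) - F' y‖ * ‖u' x‖) := by
              apply mul_le_mul_of_nonneg_left ((F' (u x) - F' y).le_opNorm _)
                (norm_nonneg _)
          _ ≤ m * (ω R * ‖u' x‖) := by
              apply mul_le_mul hQm (mul_le_mul_of_nonneg_right hA (norm_nonneg _))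
                (by positivity) hm.le
          _ = q * ‖u' x‖ := by rw [← hq]; ring
      calc ‖Q ((-Real.exp (-x)) • v₀) - Q ((F' (u x) - F' y) (u' x))‖
          ≤ ‖Q ((-Real.exp (-x)) • v₀)‖ + ‖Q ((F' (u x) - F' y) (u' x))‖ :=
            norm_sub_le _ _
        _ ≤ m * Real.exp (-x) * r + q * ‖u' x‖ := add_le_add h1 h2
    have : (1 - q) * ‖u' x‖ ≤ m * r * Real.exp (-x) := by nlinarith [norm_nonneg (u' x)]
    rw [hC]
    rw [div_mul_eq_mul_div, le_div_iff₀ h1q]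
    nlinarith
  -- integrate the bound on [0, t]
  intro t ht
  have hucont : ContinuousOn u (Ici 0) := fun s hs => (huderiv s hs).continuousWithinAt
  have hmain : ‖u t - u₀‖ ≤ C * (1 - Real.exp (-t)) := by
    have hB : ∀ x : ℝ, HasDerivAt (fun s => C * (1 - Real.exp (-s))) (C * Real.exp (-x)) x := by
      intro x
      have he : HasDerivAt (fun s : ℝ => Real.exp (-s)) (-Real.exp (-x)) x := by
        have := (Real.hasDerivAt_exp (-x)).comp x (hasDerivAt_neg x)
        simpa [mul_comm, Function.comp_def] using this
      have := ((hasDerivAt_const x (1:ℝ)).sub he).const_mul C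
      simpa using this
    refine image_norm_le_of_norm_deriv_right_le_deriv_boundary
      (f := fun s => u s - u₀) (f' := u') (a := 0) (b := t) ?_ ?_ ?_ hB ?_
      (right_mem_Icc.mpr ht)
    · exact (hucont.mono Icc_subset_Ici_self).sub continuousOn_const
    · intro x hx
      exact ((huderiv x hx.1).sub_const u₀).mono (fun z hz => hx.1.trans hz)
    · simp [hu0]
    · intro x hx
      exact key x hx.1
  calc ‖u t - u₀‖ ≤ C * (1 - Real.exp (-t)) := hmain
    _ ≤ C * 1 := by
        apply mul_le_mul_of_nonneg_left _ hC0
        nlinarith [Real.exp_pos (-t)]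
    _ = C := mul_one C
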